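/- Let (X,d) be a compact metric space and L > 0. For each N ∈ ℕ let V_N be a finite set, ι_N : V_N → X and i_N : X → V_N maps satisfying d(ι_N(i_N(x)), x) ≤ δ_N for all x ∈ X, where δ_N → 0 as N → ∞. Let σ_{N,1}, …, σ_{N,K} : V_N → V_N be maps satisfying the uniform Lipschitz condition d(ι_N(σ_{N,k}(u)), ι_N(σ_{N,k}(v))) ≤ L·d(ι_N(u), ι_N(v)) for all N, all k ∈ {1,…,K}, and all u, v ∈ V_N. Then there exist a strictly increasing sequence of indices (N_j) and maps τ_1, …, τ_K : X → X, each Lipschitz with constant L, such that for every k, sup_{x ∈ X} d(ι_{N_j}(σ_{N_j,k}(i_{N_j}(x))), τ_k(x)) → 0 as j → ∞. -/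

import Mathlib

open Filter

/-- continuum limit of discrete generators (Lemma on existence of
bi-Lipschitz limit maps along a subsequence, via Arzelà–Ascoli / diagonal argument). -/
theorem stmt_0 {X : Type*} [MetricSpace X] [CompactSpace X]
    (L : ℝ) (hL : 0 < L) (K : ℕ)
    (V : ℕ → Type*) [∀ N, Fintype (V N)]
    (ι : ∀ N, V N → X) (idx : ∀ N, X → V N)
    (δ : ℕ → ℝ)
    (hδ : ∀ N (x : X), dist (ι N (idx N x)) x ≤ δ N)
    (hδ0 : Tendsto δ atTop (nhds 0))
    (σ : ∀ N, Fin K → V N → V N)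
    (hLip : ∀ N (k : Fin K) (u v : V N),
      dist (ι N (σ N k u)) (ι N (σ N k v)) ≤ L * dist (ι N u) (ι N v)) :
    ∃ (Nj : ℕ → ℕ), StrictMono Nj ∧ ∃ τ : Fin K → X → X,
      (∀ k, LipschitzWith (Real.toNNReal L) (τ k)) ∧
      ∀ k, Tendsto
        (fun j => ⨆ x : X, dist (ι (Nj j) (σ (Nj j) k (idx (Nj j) x))) (τ k x))
        atTop (nhds 0) := by
  rcases isEmpty_or_nonempty X with hX | hX
  · refine ⟨id, strictMono_id, fun _ y => y, fun k => fun a => (hX.false a).elim,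
      fun k => ?_⟩
    simp only [iSup_of_empty', Real.sSup_empty]
    exact tendsto_const_nhds
  · -- main case
    set F : ℕ → Fin K → X → X := fun N k y => ι N (σ N k (idx N y)) with hFdef
    have hF : ∀ N (k : Fin K) (y z : X),
        dist (F N k y) (F N k z) ≤ L * (dist y z + 2 * δ N) := by
      intro N k y z
      have h1 := hLip N k (idx N y) (idx N z)
      have h2 : dist (ι N (idx N y)) (ι N (idx N z)) ≤ dist y z + 2 * δ N := by
        linarith [hδ N y, hδ N z,
          dist_triangle4 (ι N (idx N y)) y z (ι N (idx N z)),
          dist_comm z (ι N (idx N z))]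
      calc dist (F N k y) (F N k z)
          ≤ L * dist (ι N (idx N y)) (ι N (idx N z)) := h1
        _ ≤ L * (dist y z + 2 * δ N) := mul_le_mul_of_nonneg_left h2 hL.le
    have hx : DenseRange (TopologicalSpace.denseSeq X) :=
      TopologicalSpace.denseRange_denseSeq X
    set x : ℕ → X := TopologicalSpace.denseSeq X with hxdef
    have hg : ∀ N, (fun q : Fin K × ℕ => F N q.1 (x q.2)) ∈
        (Set.univ : Set (Fin K × ℕ → X)) := fun _ => Set.mem_univ _
    obtain ⟨p, -, φ, hφ, hconv⟩ := isCompact_univ.tendsto_subseq hg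
    have hpt : ∀ (k : Fin K) (n : ℕ),
        Tendsto (fun j => F (φ j) k (x n)) atTop (nhds (p (k, n))) := by
      intro k n
      have := (tendsto_pi_nhds.1 hconv) (k, n)
      simpa using this
    have hδφ : Tendsto (fun j => δ (φ j)) atTop (nhds 0) :=
      hδ0.comp hφ.tendsto_atTop
    -- existence of pointwise limits everywhere
    have hex : ∀ (k : Fin K) (y : X),
        ∃ z, Tendsto (fun j => F (φ j) k y) atTop (nhds z) := by
      intro k y
      have hC : CauchySeq (fun j => F (φ j) k y) := by
        rw [Metric.cauchySeq_iff]
        intro ε hε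
        have hL1 : (0:ℝ) < L + 1 := by linarith
        set r := ε / (8 * (L + 1)) with hr
        have hr0 : 0 < r := by positivity
        obtain ⟨n, hn⟩ := Metric.denseRange_iff.1 hx y r hr0
        have hc : CauchySeq (fun j => F (φ j) k (x n)) := (hpt k n).cauchySeq
        obtain ⟨M1, hM1⟩ := Metric.cauchySeq_iff.1 hc (ε/8) (by positivity)
        obtain ⟨M2, hM2⟩ := eventually_atTop.1 (hδφ.eventually (gt_mem_nhds hr0))
        refine ⟨max M1 M2, fun m hm m' hm' => ?_⟩
        have h3 := hM1 m (le_trans (le_max_left _ _) hm) m' (le_trans (le_max_left _ _) hm')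
        have h4 := hM2 m (le_trans (le_max_right _ _) hm)
        have h5 := hM2 m' (le_trans (le_max_right _ _) hm')
        have ha : dist (F (φ m) k y) (F (φ m) k (x n)) < L * (3 * r) :=
          lt_of_le_of_lt (hF (φ m) k y (x n))
            (mul_lt_mul_of_pos_left (by linarith) hL)
        have hb : dist (F (φ m') k (x n)) (F (φ m') k y) < L * (3 * r) :=
          lt_of_le_of_lt (hF (φ m') k (x n) y)
            (mul_lt_mul_of_pos_left (by linarith [dist_comm (x n) y, hn]) hL)
        have htri := dist_triangle4 (F (φ m) k y) (F (φ m) k (x n))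
          (F (φ m') k (x n)) (F (φ m') k y)
        have hrε : 8 * (L+1) * r = ε := by rw [hr]; field_simp
        nlinarith [mul_pos hL hr0]
      exact cauchySeq_tendsto_of_complete hC
    choose τ hτ using hex
    have hτLip : ∀ k, LipschitzWith (Real.toNNReal L) (τ k) := by
      intro k
      apply LipschitzWith.of_dist_le_mul
      intro y z
      rw [Real.coe_toNNReal L hL.le]
      have hd : Tendsto (fun j => dist (F (φ j) k y) (F (φ j) k z)) atTop
          (nhds (dist (τ k y) (τ k z))) := (hτ k y).dist (hτ k z)
      have hb : Tendsto (fun j => L * (dist y z + 2 * δ (φ j))) atTop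
          (nhds (L * (dist y z + 2 * 0))) :=
        (tendsto_const_nhds.add (hδφ.const_mul 2)).const_mul L
      have := le_of_tendsto_of_tendsto' hd (by simpa using hb)
        (fun j => hF (φ j) k y z)
      simpa using this
    refine ⟨φ, hφ, τ, hτLip, ?_⟩
    intro k
    have hFeq : (fun j => ⨆ y : X, dist (ι (φ j) (σ (φ j) k (idx (φ j) y))) (τ k y))
        = fun j => ⨆ y : X, dist (F (φ j) k y) (τ k y) := rfl
    rw [hFeq, Metric.tendsto_atTop]
    intro ε hε
    have hL1 : (0:ℝ) < L + 1 := by linarith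
    set r := ε / (8 * (L + 1)) with hr
    have hr0 : 0 < r := by positivity
    obtain ⟨t, -, htfin, htcov⟩ := finite_cover_balls_of_compact (isCompact_univ : IsCompact (Set.univ : Set X)) hr0
    have hA : ∀ᶠ j in atTop, δ (φ j) < r := hδφ.eventually (gt_mem_nhds hr0)
    have hB : ∀ᶠ j in atTop, ∀ c ∈ t, dist (F (φ j) k c) (τ k c) < ε/8 := by
      rw [htfin.eventually_all]
      intro c hc
      have := (hτ k c).eventually
        (Metric.ball_mem_nhds (τ k c) (show (0:ℝ) < ε/8 by positivity))
      simpa [Metric.mem_ball] using this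
    obtain ⟨M, hM⟩ := eventually_atTop.1 (hA.and hB)
    refine ⟨M, fun j hj => ?_⟩
    obtain ⟨h4, h5⟩ := hM j hj
    have hbound : ∀ y : X, dist (F (φ j) k y) (τ k y) ≤ 5*ε/8 := by
      intro y
      obtain ⟨c, hc, hyc⟩ : ∃ c ∈ t, y ∈ Metric.ball c r := by
        have := htcov (Set.mem_univ y)
        simpa using this
      have hyc' : dist y c < r := Metric.mem_ball.1 hyc
      have h1 : dist (F (φ j) k y) (F (φ j) k c) < L * (3 * r) :=
        lt_of_le_of_lt (hF (φ j) k y c)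
          (mul_lt_mul_of_pos_left (by linarith) hL)
      have h2 := h5 c hc
      have h3 : dist (τ k c) (τ k y) ≤ L * dist c y := by
        have := (hτLip k).dist_le_mul c y
        rwa [Real.coe_toNNReal L hL.le] at this
      have h3' : dist (τ k c) (τ k y) ≤ L * r := by
        refine h3.trans (mul_le_mul_of_nonneg_left ?_ hL.le)
        rw [dist_comm]; exact hyc'.le
      have htri := dist_triangle4 (F (φ j) k y) (F (φ j) k c) (τ k c) (τ k y)
      have hrε : 8 * (L+1) * r = ε := by rw [hr]; field_simp
      nlinarith [mul_pos hL hr0]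
    have hS1 : (⨆ y : X, dist (F (φ j) k y) (τ k y)) ≤ 5*ε/8 := ciSup_le hbound
    have hS0 : 0 ≤ ⨆ y : X, dist (F (φ j) k y) (τ k y) :=
      Real.iSup_nonneg fun y => dist_nonneg
    rw [Real.dist_eq, sub_zero, abs_of_nonneg hS0]
    linarith
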